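/- Let ω(t) = t, and suppose φ is an analytic self-map of 𝔻 such that for some r ∈ (0, 2√3/9) and ε > 0, for each w ∈ 𝔻 there is z_w ∈ 𝔻 with ρ(φ(z_w), w) < r and (1-|z_w|²)|φ'(z_w)|/(1-|φ(z_w)|²) > ε. Then for every harmonic Bloch mapping f on 𝔻, ‖f∘φ‖_s ≥ (1 - (3√3/2)r)·ε·‖f‖_s, where ‖·‖_s denotes the harmonic Bloch semi-norm sup_{z∈𝔻}(1-|z|²)Λ_f(z). -/

import Mathlib

open Metric Set Complex

noncomputable def mob (a ξ : ℂ) : ℂ := (a - ξ) / (1 - (starRingEnd ℂ) a * ξ)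
noncomputable def dmob (a ξ : ℂ) : ℂ := ((Complex.normSq a : ℂ) - 1) / (1 - (starRingEnd ℂ) a * ξ)^2

noncomputable def Complex.abs : AbsoluteValue ℂ ℝ :=
  IsAbsoluteValue.toAbsoluteValue (norm : ℂ → ℝ)

lemma Complex.norm_eq_abs (z : ℂ) : ‖z‖ = Complex.abs z := rfl

lemma Complex.abs_conj (z : ℂ) : Complex.abs ((starRingEnd ℂ) z) = Complex.abs z :=
  Complex.norm_conj z

lemma Complex.sq_abs (z : ℂ) : Complex.abs z ^ 2 = Complex.normSq z := Complex.sq_norm z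

lemma Complex.abs_apply (z : ℂ) : Complex.abs z = Real.sqrt (Complex.normSq z) := Complex.norm_def z

lemma Complex.abs_ofReal (r : ℝ) : Complex.abs (r : ℂ) = |r| := Complex.norm_real r

lemma Complex.re_le_abs (z : ℂ) : z.re ≤ Complex.abs z := Complex.re_le_norm z

lemma Complex.abs_le_abs_of_mapsTo_ball_self {f : ℂ → ℂ} {R : ℝ} {z : ℂ}
    (hd : DifferentiableOn ℂ f (Metric.ball 0 R))
    (h_maps : Set.MapsTo f (Metric.ball 0 R) (Metric.ball 0 R)) (h₀ : f 0 = 0)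
    (hz : Complex.abs z < R) : Complex.abs (f z) ≤ Complex.abs z :=
  Complex.norm_le_norm_of_mapsTo_ball hd (h_maps.mono_right Metric.ball_subset_closedBall) h₀ hz

lemma normSq_key (a ξ : ℂ) :
    Complex.normSq (1 - (starRingEnd ℂ) a * ξ) - Complex.normSq (a - ξ)
      = (1 - Complex.normSq a) * (1 - Complex.normSq ξ) := by
  simp [Complex.normSq_apply, Complex.sub_re, Complex.sub_im, Complex.mul_re, Complex.mul_im,
    Complex.one_re, Complex.one_im]
  ring

lemma den_ne (a ξ : ℂ) (ha : Complex.abs a < 1) (hξ : Complex.abs ξ < 1) :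
    1 - (starRingEnd ℂ) a * ξ ≠ 0 := by
  intro hc
  have h1 : Complex.abs ((starRingEnd ℂ) a * ξ) < 1 := by
    rw [map_mul, Complex.abs_conj]
    nlinarith [Complex.abs.nonneg a, Complex.abs.nonneg ξ]
  have : (starRingEnd ℂ) a * ξ = 1 := by linear_combination -hc
  rw [this] at h1; simp at h1

lemma normSq_lt (a ξ : ℂ) (ha : Complex.abs a < 1) (hξ : Complex.abs ξ < 1) :
    Complex.normSq (a - ξ) < Complex.normSq (1 - (starRingEnd ℂ) a * ξ) := by
  have hk := normSq_key a ξ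
  have ha' : Complex.normSq a < 1 := by rw [← Complex.sq_abs]; nlinarith [Complex.abs.nonneg a]
  have hξ' : Complex.normSq ξ < 1 := by rw [← Complex.sq_abs]; nlinarith [Complex.abs.nonneg ξ]
  nlinarith

lemma mob_lt_one (a ξ : ℂ) (ha : Complex.abs a < 1) (hξ : Complex.abs ξ < 1) :
    Complex.abs (mob a ξ) < 1 := by
  have hd := den_ne a ξ ha hξ
  have h2 : Complex.abs (a - ξ) < Complex.abs (1 - (starRingEnd ℂ) a * ξ) := by
    rw [Complex.abs_apply, Complex.abs_apply]
    exact Real.sqrt_lt_sqrt (Complex.normSq_nonneg _) (normSq_lt a ξ ha hξ)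
  rw [mob, map_div₀, div_lt_one (Complex.abs.pos hd)]
  exact h2

/-- the key modulus identity for the "derivative factor" -/
lemma dmob_identity (a ξ : ℂ) (ha : Complex.abs a < 1) (hξ : Complex.abs ξ < 1) :
    Complex.abs (dmob a ξ) * (1 - Complex.abs ξ ^ 2) = 1 - Complex.abs (mob a ξ) ^ 2 := by
  have hd := den_ne a ξ ha hξ
  have hdpos : 0 < Complex.normSq (1 - (starRingEnd ℂ) a * ξ) := by rwa [Complex.normSq_pos]
  have ha' : Complex.normSq a ≤ 1 := by rw [← Complex.sq_abs]; nlinarith [Complex.abs.nonneg a]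
  have h1 : Complex.abs (dmob a ξ) = (1 - Complex.normSq a) / Complex.normSq (1 - (starRingEnd ℂ) a * ξ) := by
    rw [dmob, map_div₀]
    have hnum : Complex.abs ((Complex.normSq a : ℂ) - 1) = 1 - Complex.normSq a := by
      rw [show ((Complex.normSq a : ℂ) - 1) = ((Complex.normSq a - 1 : ℝ) : ℂ) by push_cast; ring,
        Complex.abs_ofReal, abs_of_nonpos (by linarith)]
      ring
    rw [hnum, map_pow, Complex.sq_abs]
  have h2 : Complex.abs (mob a ξ) ^ 2 = Complex.normSq (a - ξ) / Complex.normSq (1 - (starRingEnd ℂ) a * ξ) := by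
    rw [mob, map_div₀, div_pow, Complex.sq_abs, Complex.sq_abs]
  rw [h1, h2, Complex.sq_abs ξ]
  have hk := normSq_key a ξ
  field_simp
  nlinarith [hk]

lemma mob_mob (a ξ : ℂ) (ha : Complex.abs a < 1) (hξ : Complex.abs ξ < 1) :
    mob a (mob a ξ) = ξ := by
  have hd := den_ne a ξ ha hξ
  have hd2 := den_ne a (mob a ξ) ha (mob_lt_one a ξ ha hξ)
  rw [mob] at hd2
  rw [mob, mob, div_eq_iff hd2]
  linear_combination -(div_mul_cancel₀ (a - ξ) hd)

lemma mob_zero (a : ℂ) : mob a 0 = a := by simp [mob]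

lemma mob_self (a : ℂ) : mob a a = 0 := by simp [mob]

lemma mob_diff (a : ℂ) (ha : Complex.abs a < 1) :
    DifferentiableOn ℂ (mob a) (Metric.ball 0 1) := by
  intro ξ hξ
  rw [Metric.mem_ball, dist_zero_right] at hξ
  exact (DifferentiableAt.div (by fun_prop : DifferentiableAt ℂ (fun ξ : ℂ => a - ξ) ξ)
    (by fun_prop : DifferentiableAt ℂ (fun ξ : ℂ => 1 - (starRingEnd ℂ) a * ξ) ξ)
    (den_ne a ξ ha hξ)).differentiableWithinAt

lemma dmob_diff (a : ℂ) (ha : Complex.abs a < 1) :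
    DifferentiableOn ℂ (dmob a) (Metric.ball 0 1) := by
  intro ξ hξ
  rw [Metric.mem_ball, dist_zero_right] at hξ
  refine DifferentiableAt.differentiableWithinAt ?_
  have h1 : DifferentiableAt ℂ (fun ξ : ℂ => (1 - (starRingEnd ℂ) a * ξ)^2) ξ :=
    ((differentiableAt_const _).sub (differentiableAt_id.const_mul _)).pow 2
  show DifferentiableAt ℂ (fun ξ : ℂ => ((Complex.normSq a : ℂ) - 1) / (1 - (starRingEnd ℂ) a * ξ)^2) ξ
  exact (differentiableAt_const _).div h1 (pow_ne_zero 2 (den_ne a ξ ha hξ))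

lemma numeric_step (x ζ τ p : ℝ) (hx0 : 0 ≤ x) (hζ0 : 0 ≤ ζ) (hτ0 : 0 ≤ τ)
    (hx : x < 1) (hζ : ζ < 1) (hτ : τ < 1)
    (hp : p ≤ x*ζ)
    (F : x^2 + ζ^2 - 2*p ≤ τ^2 * (1 + x^2*ζ^2 - 2*p)) : ζ ≤ x + τ := by
  by_contra hcon
  push_neg at hcon
  have hA : 0 < (1+x*τ)*ζ - (x+τ) := by
    nlinarith [mul_nonneg (mul_nonneg hx0 hτ0) hζ0]
  have hB : 0 < (1-x*τ)*ζ - (x-τ) := by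
    nlinarith [mul_nonneg hτ0 (by nlinarith : (0:ℝ) ≤ 1 - x*ζ)]
  nlinarith [mul_pos hA hB,
    mul_nonneg (by nlinarith : (0:ℝ) ≤ x*ζ - p) (by nlinarith : (0:ℝ) ≤ 1 - τ^2)]

/-- pseudo-hyperbolic contraction consequence: if `|b - Z| ≤ τ |1 - conj b Z|`
with everything in the unit disk, then `|Z| ≤ |b| + τ`. -/
lemma abs_le_of_rho_le (b Z : ℂ) (τ : ℝ) (hτ0 : 0 ≤ τ) (hτ : τ < 1)
    (hb : Complex.abs b < 1) (hZ : Complex.abs Z < 1)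
    (hle : Complex.abs (b - Z) ≤ τ * Complex.abs (1 - (starRingEnd ℂ) b * Z)) :
    Complex.abs Z ≤ Complex.abs b + τ := by
  set x := Complex.abs b with hxdef
  set ζ := Complex.abs Z with hζdef
  have hx0 : 0 ≤ x := Complex.abs.nonneg b
  have hζ0 : 0 ≤ ζ := Complex.abs.nonneg Z
  set p := ((starRingEnd ℂ) b * Z).re with hpdef
  have hp : p ≤ x*ζ := by
    calc p ≤ Complex.abs ((starRingEnd ℂ) b * Z) := Complex.re_le_abs _
    _ = x * ζ := by rw [map_mul, Complex.abs_conj]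
  have e1 : Complex.abs (b - Z)^2 = x^2 + ζ^2 - 2*p := by
    rw [hxdef, hζdef, Complex.sq_abs, Complex.sq_abs, Complex.sq_abs]
    simp [hpdef, Complex.normSq_apply, Complex.sub_re, Complex.sub_im, Complex.mul_re,
      Complex.mul_im]
    ring
  have e2 : Complex.abs (1 - (starRingEnd ℂ) b * Z)^2 = 1 + x^2*ζ^2 - 2*p := by
    rw [hxdef, hζdef, Complex.sq_abs, Complex.sq_abs, Complex.sq_abs]
    simp [hpdef, Complex.normSq_apply, Complex.sub_re, Complex.sub_im, Complex.mul_re,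
      Complex.mul_im, Complex.one_re, Complex.one_im]
    ring
  have F : x^2 + ζ^2 - 2*p ≤ τ^2 * (1 + x^2*ζ^2 - 2*p) := by
    rw [← e1, ← e2]
    calc Complex.abs (b - Z)^2 ≤ (τ * Complex.abs (1 - (starRingEnd ℂ) b * Z))^2 := by
          apply sq_le_sq' _ hle
          have := Complex.abs.nonneg (b - Z)
          nlinarith [mul_nonneg hτ0 (Complex.abs.nonneg (1 - (starRingEnd ℂ) b * Z))]
    _ = τ^2 * Complex.abs (1 - (starRingEnd ℂ) b * Z)^2 := by ring
  exact numeric_step x ζ τ p hx0 hζ0 hτ0 hb hZ hτ hp F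

/-- Core Schwarz-Pick estimate -/
lemma core (K : ℂ → ℂ) (hK : DifferentiableOn ℂ K (Metric.ball 0 1)) (S : ℝ)
    (hb : ∀ ξ ∈ Metric.ball (0:ℂ) 1, Complex.abs (K ξ) * (1 - Complex.abs ξ^2) ≤ S)
    (u : ℂ) (hu : Complex.abs u < 2*Real.sqrt 3/9) :
    Complex.abs (K u) ≤ Complex.abs (K 0) + 3*Real.sqrt 3/2 * S * Complex.abs u := by
  have hs3 : (Real.sqrt 3)^2 = 3 := Real.sq_sqrt (by norm_num)
  have hs3pos : 0 < Real.sqrt 3 := Real.sqrt_pos.2 (by norm_num)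
  have hs3lt : Real.sqrt 3 < 2 := by nlinarith
  have hs3gt : 1 < Real.sqrt 3 := by nlinarith
  have hu0 : 0 ≤ Complex.abs u := Complex.abs.nonneg u
  have hu23 : Real.sqrt 3 * Complex.abs u < 2/3 := by nlinarith
  have hu1 : Complex.abs u < 1 := by nlinarith
  have humem : u ∈ Metric.ball (0:ℂ) 1 := by rwa [Metric.mem_ball, dist_zero_right]
  have h0mem : (0:ℂ) ∈ Metric.ball (0:ℂ) 1 := by simp
  have hS0 : 0 ≤ S := by
    have h1 := hb 0 h0mem
    simp at h1
    linarith [Complex.abs.nonneg (K 0)]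
  rcases eq_or_lt_of_le hS0 with hSeq | hSpos
  · -- S = 0 : K u = 0
    have h1 := hb u humem
    rw [← hSeq] at h1
    have hq : Complex.abs u ^ 2 < 1 := by nlinarith
    have h2 : Complex.abs (K u) ≤ 0 := by nlinarith [Complex.abs.nonneg (K u)]
    have h3 : 0 ≤ Complex.abs (K 0) := Complex.abs.nonneg _
    nlinarith
  · set M : ℝ := 3*S/2 with hMdef
    have hMpos : 0 < M := by positivity
    set c : ℂ := ((Real.sqrt 3 : ℝ) : ℂ)⁻¹ with hcdef
    have hcabs : Complex.abs c = (Real.sqrt 3)⁻¹ := by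
      rw [hcdef, map_inv₀, Complex.abs_ofReal, abs_of_pos hs3pos]
    set ψ : ℂ → ℂ := fun ξ => K (c * ξ) / M with hψdef
    have hscale : ∀ ξ : ℂ, Complex.abs ξ < 1 → Complex.abs (c * ξ) < 1 ∧
        Complex.abs (c*ξ)^2 = Complex.abs ξ^2 / 3 := by
      intro ξ hξ
      rw [map_mul, hcabs]
      constructor
      · have := Complex.abs.nonneg ξ
        rw [inv_mul_lt_iff₀ hs3pos] ; nlinarith
      · rw [mul_pow, ← hs3]
        field_simp
        rw [Real.sqrt_sq hs3pos.le]
    have hψd : DifferentiableOn ℂ ψ (Metric.ball 0 1) := by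
      apply DifferentiableOn.div_const
      apply DifferentiableOn.comp hK (by fun_prop)
      intro ξ hξ
      rw [Metric.mem_ball, dist_zero_right] at hξ ⊢
      exact (hscale ξ hξ).1
    have hψm : MapsTo ψ (Metric.ball 0 1) (Metric.ball 0 1) := by
      intro ξ hξ
      rw [Metric.mem_ball, dist_zero_right, Complex.norm_eq_abs] at hξ ⊢
      obtain ⟨hlt, hsq⟩ := hscale ξ hξ
      have hb' := hb (c*ξ) (by rwa [Metric.mem_ball, dist_zero_right])
      have habsξ : 0 ≤ Complex.abs ξ := Complex.abs.nonneg ξ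
      have h2 : Complex.abs (K (c*ξ)) * (1 - Complex.abs ξ^2/3) ≤ S := by rwa [hsq] at hb'
      have hKb : Complex.abs (K (c*ξ)) < M := by
        by_contra hk
        push_neg at hk
        rw [hMdef] at hk
        have hq : Complex.abs ξ ^ 2 < 1 := by nlinarith
        have h5 : (0:ℝ) ≤ 1 - Complex.abs ξ^2/3 := by nlinarith
        nlinarith [mul_le_mul_of_nonneg_right hk h5]
      have hnorml : Complex.abs (ψ ξ) = Complex.abs (K (c*ξ)) / M := by
        rw [hψdef]
        simp only [map_div₀, Complex.abs_ofReal, abs_of_pos hMpos]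
      rw [hnorml, div_lt_one hMpos]
      exact hKb
    have hb0 : Complex.abs (ψ 0) < 1 := by
      have := hψm h0mem
      rwa [Metric.mem_ball, dist_zero_right, Complex.norm_eq_abs] at this
    set b : ℂ := ψ 0 with hbdef
    set g' : ℂ → ℂ := fun ξ => mob b (ψ ξ) with hgdef
    have hgd : DifferentiableOn ℂ g' (Metric.ball 0 1) :=
      (mob_diff b hb0).comp hψd hψm
    have hgm : MapsTo g' (Metric.ball 0 1) (Metric.ball 0 1) := by
      intro ξ hξ
      rw [Metric.mem_ball, dist_zero_right, Complex.norm_eq_abs]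
      have hψξ := hψm hξ
      rw [Metric.mem_ball, dist_zero_right, Complex.norm_eq_abs] at hψξ
      exact mob_lt_one b (ψ ξ) hb0 hψξ
    have hg0 : g' 0 = 0 := by rw [hgdef]; simp only [← hbdef]; exact mob_self b
    set a : ℂ := ((Real.sqrt 3 : ℝ) : ℂ) * u with hadef
    have haabs : Complex.abs a = Real.sqrt 3 * Complex.abs u := by
      rw [hadef, map_mul, Complex.abs_ofReal, abs_of_pos hs3pos]
    have haball : Complex.abs a < 1 := by rw [haabs]; linarith
    have hschwarz := Complex.abs_le_abs_of_mapsTo_ball_self hgd hgm hg0 haball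
    have hca : c * a = u := by
      rw [hcdef, hadef, ← mul_assoc, inv_mul_cancel₀ (Complex.ofReal_ne_zero.2 hs3pos.ne'), one_mul]
    set Z : ℂ := ψ a with hZdef
    have hZlt : Complex.abs Z < 1 := by
      have := hψm (by rwa [Metric.mem_ball, dist_zero_right, Complex.norm_eq_abs] : a ∈ Metric.ball (0:ℂ) 1)
      rwa [Metric.mem_ball, dist_zero_right, Complex.norm_eq_abs] at this
    have hrho : Complex.abs (b - Z) ≤ Complex.abs a * Complex.abs (1 - (starRingEnd ℂ) b * Z) := by
      have hden := den_ne b Z hb0 hZlt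
      have h6 : Complex.abs (g' a) ≤ Complex.abs a := hschwarz
      rw [hgdef] at h6
      simp only [← hZdef] at h6
      rw [mob, map_div₀, div_le_iff₀ (Complex.abs.pos hden)] at h6
      exact h6
    have hZle : Complex.abs Z ≤ Complex.abs b + Complex.abs a :=
      abs_le_of_rho_le b Z (Complex.abs a) (Complex.abs.nonneg a)
        haball hb0 hZlt hrho
    -- translate back
    have hbval : Complex.abs b = Complex.abs (K 0) / M := by
      rw [hbdef, hψdef]
      simp only [mul_zero, map_div₀, Complex.abs_ofReal, abs_of_pos hMpos]
    have hZval : Complex.abs Z = Complex.abs (K u) / M := by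
      rw [hZdef, hψdef]
      simp only [hca, map_div₀, Complex.abs_ofReal, abs_of_pos hMpos]
    rw [hbval, hZval] at hZle
    have h8 := mul_le_mul_of_nonneg_right hZle hMpos.le
    rw [div_mul_cancel₀ _ hMpos.ne', add_mul, div_mul_cancel₀ _ hMpos.ne'] at h8
    calc Complex.abs (K u) ≤ Complex.abs (K 0) + Complex.abs a * M := h8
    _ = Complex.abs (K 0) + 3*Real.sqrt 3/2 * S * Complex.abs u := by
        rw [haabs, hMdef]; ring

lemma exists_unimodular (v : ℂ) : ∃ c : ℂ, Complex.abs c = 1 ∧ c * v = (Complex.abs v : ℂ) := by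
  rcases eq_or_ne v 0 with rfl | hv
  · exact ⟨1, by simp⟩
  · refine ⟨(Complex.abs v : ℂ) / v, ?_, ?_⟩
    · rw [map_div₀, Complex.abs_ofReal, _root_.abs_of_nonneg (Complex.abs.nonneg v), div_self]
      exact Complex.abs.ne_zero hv
    · field_simp

lemma mob_mapsTo (a : ℂ) (ha : Complex.abs a < 1) :
    Set.MapsTo (mob a) (Metric.ball 0 1) (Metric.ball 0 1) := by
  intro ξ hξ
  rw [Metric.mem_ball, dist_zero_right, Complex.norm_eq_abs] at hξ ⊢
  exact mob_lt_one a ξ ha hξ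

lemma main_lip (F G : ℂ → ℂ) (hF : DifferentiableOn ℂ F (Metric.ball 0 1))
    (hG : DifferentiableOn ℂ G (Metric.ball 0 1)) (S : ℝ)
    (hb : ∀ ξ ∈ Metric.ball (0:ℂ) 1,
      (1 - Complex.abs ξ^2) * (Complex.abs (F ξ) + Complex.abs (G ξ)) ≤ S)
    (w p : ℂ) (hw : Complex.abs w < 1) (hp : Complex.abs p < 1)
    (r : ℝ) (hr2 : r < 2*Real.sqrt 3/9)
    (ht : Complex.abs ((p - w)/(1 - (starRingEnd ℂ) w * p)) < r) :
    (1 - Complex.abs w^2) * (Complex.abs (F w) + Complex.abs (G w)) ≤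
      (1 - Complex.abs p^2) * (Complex.abs (F p) + Complex.abs (G p))
        + 3*Real.sqrt 3/2 * S * r := by
  have hS0 : 0 ≤ S := by
    have h0 := hb 0 (by simp)
    simp at h0
    linarith [Complex.abs.nonneg (F 0), Complex.abs.nonneg (G 0)]
  set u : ℂ := mob w p with hudef
  have huabs : Complex.abs u = Complex.abs ((p - w)/(1 - (starRingEnd ℂ) w * p)) := by
    rw [hudef, mob, map_div₀, map_div₀, Complex.abs.map_sub]
  have hur : Complex.abs u < r := by rw [huabs]; exact ht
  have hu239 : Complex.abs u < 2*Real.sqrt 3/9 := lt_trans hur hr2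
  have hu1 : Complex.abs u < 1 := mob_lt_one w p hw hp
  -- the composed Möbius transformation and derivative factor
  set μ : ℂ → ℂ := fun ξ => mob w (mob u ξ) with hμdef
  set D : ℂ → ℂ := fun ξ => dmob w (mob u ξ) * dmob u ξ with hDdef
  have hμmem : ∀ ξ : ℂ, Complex.abs ξ < 1 → Complex.abs (μ ξ) < 1 := by
    intro ξ hξ
    exact mob_lt_one w _ hw (mob_lt_one u ξ hu1 hξ)
  have hDkey : ∀ ξ : ℂ, Complex.abs ξ < 1 →
      Complex.abs (D ξ) * (1 - Complex.abs ξ^2) = 1 - Complex.abs (μ ξ)^2 := by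
    intro ξ hξ
    have h1 := dmob_identity u ξ hu1 hξ
    have h2 := dmob_identity w (mob u ξ) hw (mob_lt_one u ξ hu1 hξ)
    rw [hDdef, hμdef]
    simp only [map_mul]
    calc Complex.abs (dmob w (mob u ξ)) * Complex.abs (dmob u ξ) * (1 - Complex.abs ξ^2)
        = Complex.abs (dmob w (mob u ξ)) * (Complex.abs (dmob u ξ) * (1 - Complex.abs ξ^2)) := by ring
      _ = Complex.abs (dmob w (mob u ξ)) * (1 - Complex.abs (mob u ξ)^2) := by rw [h1]
      _ = 1 - Complex.abs (mob w (mob u ξ))^2 := h2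
  have hμ0 : μ 0 = p := by rw [hμdef]; simp only [mob_zero]; exact mob_mob w p hw hp
  have hμu : μ u = w := by rw [hμdef]; simp only [mob_self]; exact mob_zero w
  -- unimodular constants
  obtain ⟨c₁, hc₁, hc₁v⟩ := exists_unimodular (F w)
  obtain ⟨c₂, hc₂, hc₂v⟩ := exists_unimodular (G w)
  set K : ℂ → ℂ := fun ξ => (c₁ * F (μ ξ) + c₂ * G (μ ξ)) * D ξ with hKdef
  have hKd : DifferentiableOn ℂ K (Metric.ball 0 1) := by
    have hμd : DifferentiableOn ℂ μ (Metric.ball 0 1) :=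
      (mob_diff w hw).comp (mob_diff u hu1) (mob_mapsTo u hu1)
    have hDd : DifferentiableOn ℂ D (Metric.ball 0 1) :=
      ((dmob_diff w hw).comp (mob_diff u hu1) (mob_mapsTo u hu1)).mul (dmob_diff u hu1)
    have hμmaps : Set.MapsTo μ (Metric.ball 0 1) (Metric.ball 0 1) :=
      (mob_mapsTo w hw).comp (mob_mapsTo u hu1)
    exact (((hF.comp hμd hμmaps).const_mul c₁).add
      ((hG.comp hμd hμmaps).const_mul c₂)).mul hDd
  have hKb : ∀ ξ ∈ Metric.ball (0:ℂ) 1,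
      Complex.abs (K ξ) * (1 - Complex.abs ξ^2) ≤ S := by
    intro ξ hξ
    rw [Metric.mem_ball, dist_zero_right, Complex.norm_eq_abs] at hξ
    have h1 : Complex.abs (K ξ) ≤
        (Complex.abs (F (μ ξ)) + Complex.abs (G (μ ξ))) * Complex.abs (D ξ) := by
      rw [hKdef]
      simp only [map_mul]
      apply mul_le_mul_of_nonneg_right _ (Complex.abs.nonneg _)
      calc Complex.abs (c₁ * F (μ ξ) + c₂ * G (μ ξ))
          ≤ Complex.abs (c₁ * F (μ ξ)) + Complex.abs (c₂ * G (μ ξ)) := Complex.abs.add_le _ _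
        _ = Complex.abs (F (μ ξ)) + Complex.abs (G (μ ξ)) := by
            rw [map_mul, map_mul, hc₁, hc₂, one_mul, one_mul]
    have h2 : (0:ℝ) ≤ 1 - Complex.abs ξ^2 := by nlinarith [Complex.abs.nonneg ξ]
    calc Complex.abs (K ξ) * (1 - Complex.abs ξ^2)
        ≤ (Complex.abs (F (μ ξ)) + Complex.abs (G (μ ξ))) * Complex.abs (D ξ)
            * (1 - Complex.abs ξ^2) :=
          mul_le_mul_of_nonneg_right h1 h2
      _ = (1 - Complex.abs (μ ξ)^2) * (Complex.abs (F (μ ξ)) + Complex.abs (G (μ ξ))) := by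
          rw [mul_assoc, hDkey ξ hξ]; ring
      _ ≤ S := by
          have hmm : μ ξ ∈ Metric.ball (0:ℂ) 1 := by
            rw [Metric.mem_ball, dist_zero_right, Complex.norm_eq_abs]
            exact hμmem ξ hξ
          exact hb (μ ξ) hmm
  -- value at u
  have hKu : Complex.abs (K u) = (Complex.abs (F w) + Complex.abs (G w)) * Complex.abs (D u) := by
    rw [hKdef]
    simp only [hμu, map_mul]
    congr 1
    rw [hc₁v, hc₂v, ← Complex.ofReal_add, Complex.abs_ofReal,
      _root_.abs_of_nonneg (by positivity : (0:ℝ) ≤ Complex.abs (F w) + Complex.abs (G w))]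
  have hKu2 : (1 - Complex.abs w^2) * (Complex.abs (F w) + Complex.abs (G w))
      = Complex.abs (K u) * (1 - Complex.abs u^2) := by
    rw [hKu]
    have := hDkey u hu1
    rw [mul_assoc, this, hμu]
    ring
  -- value at 0
  have hK0 : Complex.abs (K 0) ≤ (1 - Complex.abs p^2) * (Complex.abs (F p) + Complex.abs (G p)) := by
    have h1 : Complex.abs (K 0) ≤
        (Complex.abs (F p) + Complex.abs (G p)) * Complex.abs (D 0) := by
      rw [hKdef]
      simp only [hμ0, map_mul]
      apply mul_le_mul_of_nonneg_right _ (Complex.abs.nonneg _)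
      calc Complex.abs (c₁ * F p + c₂ * G p)
          ≤ Complex.abs (c₁ * F p) + Complex.abs (c₂ * G p) := Complex.abs.add_le _ _
        _ = Complex.abs (F p) + Complex.abs (G p) := by
            rw [map_mul, map_mul, hc₁, hc₂, one_mul, one_mul]
    have h2 : Complex.abs (D 0) = 1 - Complex.abs p^2 := by
      have := hDkey 0 (by simp)
      simpa [hμ0] using this
    calc Complex.abs (K 0) ≤ (Complex.abs (F p) + Complex.abs (G p)) * Complex.abs (D 0) := h1
      _ = (1 - Complex.abs p^2) * (Complex.abs (F p) + Complex.abs (G p)) := by rw [h2]; ring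
  -- put it together via the core estimate
  have hcore := core K hKd S hKb u hu239
  have hKupos : 0 ≤ Complex.abs (K u) := Complex.abs.nonneg _
  have husq : 0 ≤ Complex.abs u ^2 := sq_nonneg _
  have hfin : Complex.abs (K u) * (1 - Complex.abs u^2) ≤ Complex.abs (K u) := by nlinarith
  have hlast : 3*Real.sqrt 3/2 * S * Complex.abs u ≤ 3*Real.sqrt 3/2 * S * r := by
    apply mul_le_mul_of_nonneg_left hur.le
    positivity
  calc (1 - Complex.abs w^2) * (Complex.abs (F w) + Complex.abs (G w))
      = Complex.abs (K u) * (1 - Complex.abs u^2) := hKu2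
    _ ≤ Complex.abs (K u) := hfin
    _ ≤ Complex.abs (K 0) + 3*Real.sqrt 3/2 * S * Complex.abs u := hcore
    _ ≤ (1 - Complex.abs p^2) * (Complex.abs (F p) + Complex.abs (G p))
        + 3*Real.sqrt 3/2 * S * r := add_le_add hK0 hlast

theorem statement12 (φ : ℂ → ℂ)
    (hφa : DifferentiableOn ℂ φ (Metric.ball 0 1))
    (hφm : Set.MapsTo φ (Metric.ball 0 1) (Metric.ball 0 1))
    (r ε : ℝ) (hr : r ∈ Set.Ioo (0 : ℝ) (2 * Real.sqrt 3 / 9)) (hε : 0 < ε)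
    (hcover : ∀ w ∈ Metric.ball (0 : ℂ) 1, ∃ z ∈ Metric.ball (0 : ℂ) 1,
      ‖(φ z - w) / (1 - (starRingEnd ℂ) w * φ z)‖ < r ∧
      (1 - ‖z‖ ^ 2) * ‖deriv φ z‖ / (1 - ‖φ z‖ ^ 2) > ε)
    (h g : ℂ → ℂ)
    (hh : DifferentiableOn ℂ h (Metric.ball 0 1))
    (hg : DifferentiableOn ℂ g (Metric.ball 0 1))
    (S T : ℝ)
    (hS : IsLUB {y : ℝ | ∃ z ∈ Metric.ball (0 : ℂ) 1,
      y = (1 - ‖z‖ ^ 2) *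
        (‖deriv h z‖ + ‖deriv g z‖)} S)
    (hT : IsLUB {y : ℝ | ∃ z ∈ Metric.ball (0 : ℂ) 1,
      y = (1 - ‖z‖ ^ 2) *
        (‖deriv (h ∘ φ) z‖ + ‖deriv (g ∘ φ) z‖)} T) :
    T ≥ (1 - 3 * Real.sqrt 3 / 2 * r) * ε * S := by
  simp only [Complex.norm_eq_abs] at hcover hS hT
  have hball : ∀ ξ : ℂ, ξ ∈ Metric.ball (0:ℂ) 1 ↔ Complex.abs ξ < 1 := by
    intro ξ; rw [Metric.mem_ball, dist_zero_right, Complex.norm_eq_abs]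
  -- S is an upper bound
  have hub : ∀ ξ ∈ Metric.ball (0:ℂ) 1,
      (1 - Complex.abs ξ^2) * (Complex.abs (deriv h ξ) + Complex.abs (deriv g ξ)) ≤ S := by
    intro ξ hξ
    exact hS.1 ⟨ξ, hξ, rfl⟩
  have hS0 : 0 ≤ S := by
    have h0 := hub 0 (by simp)
    simp at h0
    nlinarith [Complex.abs.nonneg (deriv h 0), Complex.abs.nonneg (deriv g 0)]
  -- derivatives are analytic
  have hh' : DifferentiableOn ℂ (deriv h) (Metric.ball 0 1) :=
    ((hh.analyticOnNhd Metric.isOpen_ball).deriv).differentiableOn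
  have hg' : DifferentiableOn ℂ (deriv g) (Metric.ball 0 1) :=
    ((hg.analyticOnNhd Metric.isOpen_ball).deriv).differentiableOn
  -- key pointwise estimate
  have key : ∀ w ∈ Metric.ball (0:ℂ) 1,
      ε * ((1 - Complex.abs w^2) * (Complex.abs (deriv h w) + Complex.abs (deriv g w)))
        ≤ T + ε * (3*Real.sqrt 3/2 * S * r) := by
    intro w hw
    obtain ⟨z, hz, hrho, hq⟩ := hcover w hw
    set p : ℂ := φ z with hpdef
    have hpball : p ∈ Metric.ball (0:ℂ) 1 := hφm hz
    have hw1 : Complex.abs w < 1 := (hball w).1 hw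
    have hz1 : Complex.abs z < 1 := (hball z).1 hz
    have hp1 : Complex.abs p < 1 := (hball p).1 hpball
    have hmain := main_lip (deriv h) (deriv g) hh' hg' S hub w p hw1 hp1 r hr.2 hrho
    -- derivative of composition
    have hφz : DifferentiableAt ℂ φ z := hφa.differentiableAt (Metric.isOpen_ball.mem_nhds hz)
    have hhp : DifferentiableAt ℂ h p := hh.differentiableAt (Metric.isOpen_ball.mem_nhds hpball)
    have hgp : DifferentiableAt ℂ g p := hg.differentiableAt (Metric.isOpen_ball.mem_nhds hpball)
    have hcomp1 : deriv (h ∘ φ) z = deriv h p * deriv φ z := deriv_comp (x := z) hhp hφz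
    have hcomp2 : deriv (g ∘ φ) z = deriv g p * deriv φ z := deriv_comp (x := z) hgp hφz
    have hYmem : (1 - Complex.abs z^2) *
        (Complex.abs (deriv (h ∘ φ) z) + Complex.abs (deriv (g ∘ φ) z)) ≤ T :=
      hT.1 ⟨z, hz, rfl⟩
    have hYval : (1 - Complex.abs z^2) *
        (Complex.abs (deriv (h ∘ φ) z) + Complex.abs (deriv (g ∘ φ) z))
        = ((1 - Complex.abs z^2) * Complex.abs (deriv φ z)) *
          (Complex.abs (deriv h p) + Complex.abs (deriv g p)) := by
      rw [hcomp1, hcomp2, map_mul, map_mul]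
      ring
    have hd : 0 < 1 - Complex.abs p^2 := by nlinarith [Complex.abs.nonneg p]
    have hq2 : ε * (1 - Complex.abs p^2) < (1 - Complex.abs z^2) * Complex.abs (deriv φ z) := by
      rw [gt_iff_lt, lt_div_iff₀ hd] at hq
      linarith
    have hΛ0 : 0 ≤ Complex.abs (deriv h p) + Complex.abs (deriv g p) := by positivity
    have step1 : ε * ((1 - Complex.abs p^2) *
        (Complex.abs (deriv h p) + Complex.abs (deriv g p)))
        ≤ (1 - Complex.abs z^2) * Complex.abs (deriv φ z) *
          (Complex.abs (deriv h p) + Complex.abs (deriv g p)) := by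
      rw [← mul_assoc]
      exact mul_le_mul_of_nonneg_right hq2.le hΛ0
    have step2 : ε * ((1 - Complex.abs w^2) *
        (Complex.abs (deriv h w) + Complex.abs (deriv g w)))
        ≤ ε * ((1 - Complex.abs p^2) *
          (Complex.abs (deriv h p) + Complex.abs (deriv g p)))
          + ε * (3*Real.sqrt 3/2 * S * r) := by
      nlinarith [hmain]
    calc ε * ((1 - Complex.abs w^2) * (Complex.abs (deriv h w) + Complex.abs (deriv g w)))
        ≤ ε * ((1 - Complex.abs p^2) * (Complex.abs (deriv h p) + Complex.abs (deriv g p)))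
          + ε * (3*Real.sqrt 3/2 * S * r) := step2
      _ ≤ (1 - Complex.abs z^2) * Complex.abs (deriv φ z) *
            (Complex.abs (deriv h p) + Complex.abs (deriv g p))
          + ε * (3*Real.sqrt 3/2 * S * r) := by linarith [step1]
      _ = (1 - Complex.abs z^2) *
            (Complex.abs (deriv (h ∘ φ) z) + Complex.abs (deriv (g ∘ φ) z))
          + ε * (3*Real.sqrt 3/2 * S * r) := by rw [hYval]
      _ ≤ T + ε * (3*Real.sqrt 3/2 * S * r) := by linarith [hYmem]
  -- conclude via LUB property of S
  have hSB : S ≤ (T + ε * (3*Real.sqrt 3/2 * S * r)) / ε := by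
    apply hS.2
    rintro y ⟨w, hw, rfl⟩
    rw [le_div_iff₀ hε]
    have := key w hw
    linarith [this]
  rw [le_div_iff₀ hε] at hSB
  have : S * ε ≤ T + ε * (3*Real.sqrt 3/2 * S * r) := hSB
  nlinarith [this]
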